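/- Let α > 0 and let (u₁,…,u_n) ∈ (0,∞)ⁿ be a positive solution of the discrete system (Sα), so that u_k = U_k(u₁) for all k and α = A(u₁). Then: (i) h·g₂(U_n(u₁))·A′(u₁) = det J(α,u); and (ii) det J(α,u) · U_k′(u₁) = h·g₂(U_n(u₁))·A′(u₁) · det Δ_{k−1}(α,u) for 2 ≤ k ≤ n, where Δ_{k−1}(α,u) is the (k−1)×(k−1) leading principal submatrix of J(α,u) and ′ denotes the derivative with respect to u₁. In particular, if det J(α,u) ≠ 0 then U_k′(u₁) = det Δ_{k−1}(α,u) for 2 ≤ k ≤ n. -/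

import Mathlib

noncomputable section

/-- `Useq g1 h k` is the function `U_{k+1}` (0-indexed version of the recursion). -/
def Useq (g1 : ℝ → ℝ) (h : ℝ) : ℕ → ℝ → ℝ
  | 0 => fun x => x
  | 1 => fun x => x + h ^ 2 / 2 * g1 x
  | k + 2 => fun x =>
      2 * Useq g1 h (k + 1) x - Useq g1 h k x + h ^ 2 * g1 (Useq g1 h (k + 1) x)

/-- `discU g1 h k` is the function `U_k` from the paper, for `1 ≤ k`. -/
def discU (g1 : ℝ → ℝ) (h : ℝ) (k : ℕ) : ℝ → ℝ := Useq g1 h (k - 1)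

/-- The function `A(u₁)` from the paper. -/
def discA (g1 g2 : ℝ → ℝ) (h : ℝ) (n : ℕ) (x : ℝ) : ℝ :=
  ((discU g1 h n x - discU g1 h (n - 1) x) / h + h / 2 * g1 (discU g1 h n x)) /
    g2 (discU g1 h n x)

/-- `(u₁, …, u_n)` (encoded as `u : ℕ → ℝ` on indices `1,…,n`) is a positive solution of
the discrete system `(Sα)`. -/
def IsSolution (g1 g2 : ℝ → ℝ) (n : ℕ) (h α : ℝ) (u : ℕ → ℝ) : Prop :=
  (∀ k, 1 ≤ k → k ≤ n → 0 < u k) ∧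
  u 2 - u 1 = h ^ 2 / 2 * g1 (u 1) ∧
  (∀ k, 2 ≤ k → k ≤ n - 1 → u (k + 1) - 2 * u k + u (k - 1) = h ^ 2 * g1 (u k)) ∧
  u n - u (n - 1) = -(h ^ 2 / 2) * g1 (u n) + h * α * g2 (u n)

/-- `G₁`, the primitive of `g₁` vanishing at `0`. -/
def primG1 (g1 : ℝ → ℝ) (x : ℝ) : ℝ := ∫ t in (0:ℝ)..x, g1 t

/-- `g := g₁/g₂`. -/
def gg (g1 g2 : ℝ → ℝ) (x : ℝ) : ℝ := g1 x / g2 x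

/-- `G := G₁/g₂²`. -/
def GG (g1 g2 : ℝ → ℝ) (x : ℝ) : ℝ := primG1 g1 x / (g2 x) ^ 2

/-- The trapezoidal-rule error `E` as a function of `u₁`. -/
def trapError (g1 : ℝ → ℝ) (h : ℝ) (n : ℕ) (x : ℝ) : ℝ :=
  (∑ k ∈ Finset.Icc 1 (n - 1),
    (g1 (discU g1 h k x) + g1 (discU g1 h (k + 1) x)) / 2 *
      (discU g1 h (k + 1) x - discU g1 h k x)) -
  (primG1 g1 (discU g1 h n x) - primG1 g1 (discU g1 h 1 x))

/-- The Jacobian matrix `J(α,u)` of the system `(Sα)`. -/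
def Jmat (g1 g2 : ℝ → ℝ) (n : ℕ) (h α : ℝ) (u : ℕ → ℝ) : Matrix (Fin n) (Fin n) ℝ :=
  Matrix.of fun i j =>
    if i = j then
      (if (i : ℕ) = 0 then 1 + h ^ 2 / 2 * deriv g1 (u 1)
       else if (i : ℕ) = n - 1 then
         1 + h ^ 2 / 2 * deriv g1 (u n) - h * α * deriv g2 (u n)
       else 2 + h ^ 2 * deriv g1 (u ((i : ℕ) + 1)))
    else if (i : ℕ) + 1 = (j : ℕ) ∨ (j : ℕ) + 1 = (i : ℕ) then -1 else 0

/-- auxiliary tridiagonal family -/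
def tri (d : ℕ → ℝ) (m : ℕ) : Matrix (Fin m) (Fin m) ℝ :=
  Matrix.of fun i j =>
    if i = j then d i else if (i:ℕ)+1 = (j:ℕ) ∨ (j:ℕ)+1 = (i:ℕ) then -1 else 0

lemma tri_det_zero (d : ℕ → ℝ) : (tri d 0).det = 1 := Matrix.det_fin_zero

lemma tri_det_one (d : ℕ → ℝ) : (tri d 1).det = d 0 := by
  simp [Matrix.det_fin_one, tri]

lemma tri_det_succ_succ (d : ℕ → ℝ) (m : ℕ) :
    (tri d (m+2)).det = d (m+1) * (tri d (m+1)).det - (tri d m).det := by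
  set a : Fin (m+2) := ⟨m, by omega⟩ with ha
  set b : Fin (m+2) := ⟨m+1, by omega⟩ with hb
  have hab : a ≠ b := by simp [ha, hb, Fin.ext_iff]
  rw [Matrix.det_succ_row _ (Fin.last (m+1))]
  have hz : ∀ j ∈ (({a,b} : Finset (Fin (m+2)))ᶜ),
      (-1 : ℝ) ^ ((Fin.last (m+1) : ℕ) + (j:ℕ)) * tri d (m+2) (Fin.last (m+1)) j *
        ((tri d (m+2)).submatrix (Fin.last (m+1)).succAbove j.succAbove).det = 0 := by
    intro j hj
    simp only [Finset.mem_compl, Finset.mem_insert, Finset.mem_singleton, not_or] at hj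
    have h1 : (j:ℕ) ≠ m := fun hh => hj.1 (Fin.ext (by simpa using hh.symm)).symm
    have h2 : (j:ℕ) ≠ m+1 := fun hh => hj.2 (Fin.ext (by simpa using hh.symm)).symm
    have : tri d (m+2) (Fin.last (m+1)) j = 0 := by
      simp only [tri, Matrix.of_apply, Fin.ext_iff]
      have hjlt : (j:ℕ) < m+2 := j.isLt
      rw [if_neg (by simp [Fin.ext_iff]; omega), if_neg (by simp [Fin.last]; omega)]
    rw [this]; ring
  rw [← Finset.union_compl ({a,b} : Finset (Fin (m+2))),
    Finset.sum_union disjoint_compl_right, Finset.sum_eq_zero hz, add_zero,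
    Finset.sum_pair hab]
  have hlast : (Fin.last (m+1)).succAbove = Fin.castSucc := Fin.succAbove_last
  have hsubb : (tri d (m+2)).submatrix Fin.castSucc Fin.castSucc = tri d (m+1) := by
    ext i j
    simp [tri, Fin.ext_iff]
  have hentb : tri d (m+2) (Fin.last (m+1)) b = d (m+1) := by
    have : Fin.last (m+1) = b := by simp [hb, Fin.ext_iff]
    simp [this, tri]; rfl
  have henta : tri d (m+2) (Fin.last (m+1)) a = -1 := by
    simp only [tri, Matrix.of_apply]
    rw [if_neg (by simp [ha, Fin.ext_iff]), if_pos (by simp [ha])]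
  -- compute the minor N for column a
  have haN : ∀ q : Fin (m+1), a.succAbove q = if (q:ℕ) < m then Fin.castSucc q else q.succ := by
    intro q
    simp [Fin.succAbove, ha, Fin.lt_def]
  set N := (tri d (m+2)).submatrix (Fin.last (m+1)).succAbove a.succAbove with hN
  have hNdet : N.det = -(tri d m).det := by
    rw [Matrix.det_succ_column N (Fin.last m)]
    have hcol : ∀ i : Fin (m+1), N i (Fin.last m) =
        if i = Fin.last m then (-1:ℝ) else 0 := by
      intro i
      have h1 : a.succAbove (Fin.last m) = Fin.last (m+1) := by
        rw [haN]; simp [Fin.ext_iff]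
      simp only [hN, Matrix.submatrix_apply, hlast, h1]
      have hi : (i:ℕ) < m+1 := i.isLt
      by_cases hc : i = Fin.last m
      · subst hc
        simp [tri, Fin.ext_iff]
      · have : (i:ℕ) ≠ m := fun hh => hc (Fin.ext (by simpa using hh))
        simp only [tri, Matrix.of_apply]
        rw [if_neg (by simp [Fin.ext_iff]; omega), if_neg (by simp [Fin.ext_iff]; omega)]
        simp [hc]
    rw [Fintype.sum_eq_single (Fin.last m) (fun i hi => by rw [hcol]; simp [hi])]
    have hmin : N.submatrix (Fin.last m).succAbove (Fin.last m).succAbove = tri d m := by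
      ext p q
      have h2 : a.succAbove (Fin.castSucc q) = Fin.castSucc (Fin.castSucc q) := by
        rw [haN]; simp [q.isLt]
      simp only [hN, Matrix.submatrix_apply, Fin.succAbove_last, hlast, h2]
      simp [tri, Fin.ext_iff]
    rw [hmin, hcol, if_pos rfl]
    have hlv : ((Fin.last m : Fin (m+1)) : ℕ) = m := rfl
    rw [hlv, show (-1:ℝ)^(m+m) = 1 from by
      rw [show m+m=2*m by omega, pow_mul]; norm_num]
    ring
  have hbl : b = Fin.last (m+1) := by simp [hb, Fin.ext_iff]
  rw [hNdet, hentb, henta, hlast, hbl, hlast, hsubb]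
  have hav : ((a:ℕ)) = m := rfl
  have hbv : ((b:ℕ)) = m+1 := rfl
  have hl : ((Fin.last (m+1) : Fin (m+2)) : ℕ) = m+1 := rfl
  rw [hav, hl]
  have e1 : (-1:ℝ)^(m+1+m) = -1 := by
    rw [show m+1+m = 2*m+1 by omega, pow_succ, pow_mul]
    norm_num
  have e2 : (-1:ℝ)^(m+1+(m+1)) = 1 := by
    rw [show m+1+(m+1) = 2*(m+1) by omega, pow_mul]
    norm_num
  rw [e1, e2]
  ring

/-- the derivative sequence of `Useq` -/
def Useq' (g1 : ℝ → ℝ) (h : ℝ) : ℕ → ℝ → ℝ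
  | 0 => fun _ => 1
  | 1 => fun x => 1 + h ^ 2 / 2 * deriv g1 x
  | k + 2 => fun x =>
      2 * Useq' g1 h (k + 1) x - Useq' g1 h k x +
        h ^ 2 * (deriv g1 (Useq g1 h (k + 1) x) * Useq' g1 h (k + 1) x)

lemma useq_hasDerivAt (g1 : ℝ → ℝ) (h : ℝ) (hg1 : Differentiable ℝ g1) :
    ∀ k x, HasDerivAt (Useq g1 h k) (Useq' g1 h k x) x := by
  intro k
  induction k using Nat.strong_induction_on with
  | _ k ih =>
    match k with
    | 0 => intro x; simpa [Useq, Useq'] using hasDerivAt_id' x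
    | 1 =>
      intro x
      have : HasDerivAt (fun x => x + h ^ 2 / 2 * g1 x)
          (1 + h ^ 2 / 2 * deriv g1 x) x :=
        (hasDerivAt_id x).add (((hg1 x).hasDerivAt).const_mul (h ^ 2 / 2))
      simpa [Useq, Useq'] using this
    | (k+2) =>
      intro x
      have h1 := ih (k+1) (by omega) x
      have h0 := ih k (by omega) x
      have hc : HasDerivAt (fun x => g1 (Useq g1 h (k+1) x))
          (deriv g1 (Useq g1 h (k+1) x) * Useq' g1 h (k+1) x) x :=
        (hg1 _).hasDerivAt.comp x h1
      have : HasDerivAt (fun x => 2 * Useq g1 h (k+1) x - Useq g1 h k x +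
          h ^ 2 * g1 (Useq g1 h (k+1) x))
          (2 * Useq' g1 h (k+1) x - Useq' g1 h k x +
            h ^ 2 * (deriv g1 (Useq g1 h (k+1) x) * Useq' g1 h (k+1) x)) x :=
        ((h1.const_mul 2).sub h0).add (hc.const_mul (h ^ 2))
      simpa [Useq, Useq'] using this

theorem stmt_18 (n : ℕ) (hn : 2 ≤ n) (h : ℝ) (hh : h = 1 / ((n : ℝ) - 1))
    (g1 g2 : ℝ → ℝ)
    (hg1C : ContDiff ℝ 3 g1) (hg2C : ContDiff ℝ 3 g2)
    (hg10 : g1 0 = 0) (hg20 : g2 0 = 0)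
    (hg1d : ∀ x > (0:ℝ), 0 < deriv g1 x) (hg2d : ∀ x > (0:ℝ), 0 < deriv g2 x)
    (hg1dd : ∀ x > (0:ℝ), 0 < deriv (deriv g1) x)
    (hg2dd : ∀ x > (0:ℝ), 0 < deriv (deriv g2) x)
    (hg1ddd : ∀ x > (0:ℝ), 0 ≤ deriv (deriv (deriv g1)) x)
    (hg2ddd : ∀ x > (0:ℝ), 0 ≤ deriv (deriv (deriv g2)) x)
    (α : ℝ) (hα : 0 < α) (u : ℕ → ℝ) (hu : IsSolution g1 g2 n h α u) :
    h * g2 (discU g1 h n (u 1)) * deriv (discA g1 g2 h n) (u 1) =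
      (Jmat g1 g2 n h α u).det ∧
    (∀ k (hk2 : 2 ≤ k) (hkn : k ≤ n),
      (Jmat g1 g2 n h α u).det * deriv (discU g1 h k) (u 1) =
        h * g2 (discU g1 h n (u 1)) * deriv (discA g1 g2 h n) (u 1) *
          ((Jmat g1 g2 n h α u).submatrix
            (Fin.castLE (by omega) : Fin (k - 1) → Fin n)
            (Fin.castLE (by omega) : Fin (k - 1) → Fin n)).det) ∧
    ((Jmat g1 g2 n h α u).det ≠ 0 →
      ∀ k (hk2 : 2 ≤ k) (hkn : k ≤ n),
        deriv (discU g1 h k) (u 1) =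
          ((Jmat g1 g2 n h α u).submatrix
            (Fin.castLE (by omega) : Fin (k - 1) → Fin n)
            (Fin.castLE (by omega) : Fin (k - 1) → Fin n)).det) := by
  obtain ⟨hpos, he1, he2, he3⟩ := hu
  have hdg1 : Differentiable ℝ g1 := hg1C.differentiable (by norm_num)
  have hdg2 : Differentiable ℝ g2 := hg2C.differentiable (by norm_num)
  have hn2 : (2:ℝ) ≤ (n:ℝ) := by exact_mod_cast hn
  have hhpos : 0 < h := by
    rw [hh]
    have : (0:ℝ) < (n:ℝ) - 1 := by linarith
    positivity
  have hne : h ≠ 0 := ne_of_gt hhpos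
  -- values of u in terms of Useq
  have hval : ∀ j, 1 ≤ j → j ≤ n → u j = Useq g1 h (j-1) (u 1) := by
    intro j
    induction j using Nat.strong_induction_on with
    | _ j ih =>
      match j with
      | 0 => intro hc; omega
      | 1 => intro _ _; simp [Useq]
      | 2 => intro _ _; show u 2 = Useq g1 h 1 (u 1); simp only [Useq]; linarith
      | (j+3) =>
        intro _ hjn
        have e := he2 (j+2) (by omega) (by omega)
        have hu1 := ih (j+2) (by omega) (by omega) (by omega)
        have hu0 := ih (j+1) (by omega) (by omega) (by omega)
        simp only [show j+2-1 = j+1 from rfl] at hu1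
        simp only [show j+1-1 = j from rfl] at hu0
        simp only [show j+3-1 = j+2 from rfl, Useq, ← hu1, ← hu0]
        simp only [show j+2+1 = j+3 from rfl, show j+2-1 = j+1 from rfl] at e
        linarith
  have hun : u n = Useq g1 h (n-1) (u 1) := hval n (by omega) le_rfl
  have hun1 : u (n-1) = Useq g1 h (n-2) (u 1) := by
    have := hval (n-1) (by omega) (by omega)
    rwa [show n-1-1 = n-2 by omega] at this
  -- positivity of g2 at u n
  have hg2pos : ∀ x > (0:ℝ), 0 < g2 x := by
    intro x hx
    have hmono : StrictMonoOn g2 (Set.Icc 0 x) := by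
      apply strictMonoOn_of_deriv_pos (convex_Icc 0 x) hg2C.continuous.continuousOn
      intro y hy
      rw [interior_Icc] at hy
      exact hg2d y hy.1
    have := hmono (Set.left_mem_Icc.2 hx.le) (Set.right_mem_Icc.2 hx.le) hx
    rwa [hg20] at this
  have hunpos : 0 < u n := hpos n (by omega) le_rfl
  have hG : g2 (u n) ≠ 0 := ne_of_gt (hg2pos (u n) hunpos)
  have hGne : g2 (Useq g1 h (n-1) (u 1)) ≠ 0 := by rw [← hun]; exact hG
  -- the diagonal
  set d : ℕ → ℝ := fun i =>
    if i = 0 then 1 + h ^ 2 / 2 * deriv g1 (u 1)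
    else if i = n - 1 then 1 + h ^ 2 / 2 * deriv g1 (u n) - h * α * deriv g2 (u n)
    else 2 + h ^ 2 * deriv g1 (u (i + 1)) with hd
  have hJ : Jmat g1 g2 n h α u = tri d n := by
    ext i j
    by_cases hij : i = j
    · subst hij; simp [Jmat, tri, hd]
    · simp [Jmat, tri, hij]
  have hsubm : ∀ m (hm : m ≤ n),
      (tri d n).submatrix (Fin.castLE hm) (Fin.castLE hm) = tri d m := by
    intro m hm
    ext i j
    simp [tri, Fin.ext_iff]
  -- det of leading principal minors
  have htd : ∀ m, m ≤ n-1 → (tri d m).det = Useq' g1 h m (u 1) := by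
    intro m
    induction m using Nat.strong_induction_on with
    | _ m ih =>
      match m with
      | 0 => intro _; rw [tri_det_zero]; simp [Useq']
      | 1 => intro _; rw [tri_det_one]; simp [hd, Useq']
      | (m+2) =>
        intro hm
        rw [tri_det_succ_succ, ih (m+1) (by omega) (by omega), ih m (by omega) (by omega)]
        have hdm : d (m+1) = 2 + h ^ 2 * deriv g1 (u (m+2)) := by
          simp only [hd]
          rw [if_neg (by omega), if_neg (by omega)]
        rw [hdm, hval (m+2) (by omega) (by omega)]
        simp only [show m+2-1 = m+1 from rfl, Useq']
        ring
  have hderivU : ∀ k, deriv (discU g1 h k) (u 1) = Useq' g1 h (k-1) (u 1) :=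
    fun k => (useq_hasDerivAt g1 h hdg1 (k-1) (u 1)).deriv
  -- derivative of A
  have hU1 := useq_hasDerivAt g1 h hdg1 (n-1) (u 1)
  have hU2 := useq_hasDerivAt g1 h hdg1 (n-2) (u 1)
  set W1 := Useq' g1 h (n-1) (u 1) with hW1
  set W2 := Useq' g1 h (n-2) (u 1) with hW2
  set Nv : ℝ := (Useq g1 h (n-1) (u 1) - Useq g1 h (n-2) (u 1))/h +
      h/2 * g1 (Useq g1 h (n-1) (u 1)) with hNv
  set Nd : ℝ := (W1 - W2)/h + h/2 * (deriv g1 (Useq g1 h (n-1) (u 1)) * W1) with hNd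
  set Gv : ℝ := g2 (Useq g1 h (n-1) (u 1)) with hGv
  set Gd : ℝ := deriv g2 (Useq g1 h (n-1) (u 1)) * W1 with hGd
  have hNder : HasDerivAt (fun x => (Useq g1 h (n-1) x - Useq g1 h (n-2) x)/h +
      h/2 * g1 (Useq g1 h (n-1) x)) Nd (u 1) :=
    ((hU1.sub hU2).div_const h).add (((hdg1 _).hasDerivAt.comp _ hU1).const_mul (h/2))
  have hGder : HasDerivAt (fun x => g2 (Useq g1 h (n-1) x)) Gd (u 1) :=
    (hdg2 _).hasDerivAt.comp _ hU1
  have hAfun : discA g1 g2 h n = fun x =>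
      ((Useq g1 h (n-1) x - Useq g1 h (n-2) x)/h + h/2 * g1 (Useq g1 h (n-1) x)) /
        g2 (Useq g1 h (n-1) x) := by
    funext x
    simp only [discA, discU]
    rw [show n-1-1 = n-2 by omega]
  have hAder : deriv (discA g1 g2 h n) (u 1) = (Nd * Gv - Nv * Gd) / Gv ^ 2 := by
    rw [hAfun]
    exact (hNder.div hGder hGne).deriv
  -- value of N from the boundary equation
  have halpha : Nv = α * Gv := by
    rw [hNv, hGv, ← hun, ← hun1, he3]
    field_simp
    ring
  -- determinant of J
  have hdetJ : (Jmat g1 g2 n h α u).det =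
      (1 + h ^ 2 / 2 * deriv g1 (u n) - h * α * deriv g2 (u n)) * W1 - W2 := by
    rw [hJ]
    have h2 : n = (n-2)+2 := by omega
    have e1 := tri_det_succ_succ d (n-2)
    rw [← h2] at e1
    rw [show n-2+1 = n-1 by omega] at e1
    rw [e1, htd (n-1) le_rfl, htd (n-2) (by omega), ← hW1, ← hW2]
    have hdn : d (n-1) = 1 + h ^ 2 / 2 * deriv g1 (u n) - h * α * deriv g2 (u n) := by
      simp [hd, show n-1 ≠ 0 by omega]
    rw [hdn]
  -- part (i)
  have hi : h * g2 (discU g1 h n (u 1)) * deriv (discA g1 g2 h n) (u 1) =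
      (Jmat g1 g2 n h α u).det := by
    have hdisc : discU g1 h n (u 1) = Useq g1 h (n-1) (u 1) := rfl
    rw [hdisc, hAder, hdetJ, ← hGv, halpha, hNd, hGd]
    have hg1u : deriv g1 (Useq g1 h (n-1) (u 1)) = deriv g1 (u n) := by rw [hun]
    have hg2u : deriv g2 (Useq g1 h (n-1) (u 1)) = deriv g2 (u n) := by rw [hun]
    rw [hg1u, hg2u]
    have hGvne : Gv ≠ 0 := hGne
    field_simp
    ring
  refine ⟨hi, ?_, ?_⟩
  · intro k hk2 hkn
    have hΔ : ((Jmat g1 g2 n h α u).submatrix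
        (Fin.castLE (by omega) : Fin (k - 1) → Fin n)
        (Fin.castLE (by omega) : Fin (k - 1) → Fin n)).det = Useq' g1 h (k-1) (u 1) := by
      rw [hJ, hsubm (k-1) (by omega)]
      exact htd (k-1) (by omega)
    rw [hi, hΔ, hderivU k]
  · intro hdet k hk2 hkn
    have hΔ : ((Jmat g1 g2 n h α u).submatrix
        (Fin.castLE (by omega) : Fin (k - 1) → Fin n)
        (Fin.castLE (by omega) : Fin (k - 1) → Fin n)).det = Useq' g1 h (k-1) (u 1) := by
      rw [hJ, hsubm (k-1) (by omega)]
      exact htd (k-1) (by omega)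
    rw [hΔ, hderivU k]
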